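/- Let r ≥ 1 be an integer, L > 0, and a ∈ ℝ with (Polynomial.Chebyshev.T ℝ (2r)).eval (−a/2) ≠ 1. Let H := (−1/L) • A(a), a matrix indexed by ZMod (2r). Define the matrix M indexed by ZMod (2r) by M p q = L · ((Polynomial.Chebyshev.U ℝ (2r − d − 1)).eval (−a/2) + (Polynomial.Chebyshev.U ℝ (d − 1)).eval (−a/2)) / (2·((Polynomial.Chebyshev.T ℝ (2r)).eval (−a/2) − 1)), where d := ((q − p : ZMod (2r))).val. Then H * M = 1 and M * H = 1; that is, H is invertible and the entries h^{pq} of H⁻¹ are given by h^{pq} = (L / (2 (T_{2r}(−a/2) − 1))) (U_{2r−q+p−1}(−a/2) + U_{q−p−1}(−a/2)) for 1 ≤ p ≤ q ≤ 2r. -/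

import Mathlib

open Matrix Polynomial.Chebyshev

/-- The cyclic shift permutation matrix `S p q = 1` if `q = p + 1`, else `0`. -/
noncomputable def shiftMat (n : ℕ) : Matrix (ZMod n) (ZMod n) ℝ :=
  fun p q => if q = p + 1 then 1 else 0

/-- The symmetric circulant matrix `A(a) = a•1 + S + Sᵀ`. -/
noncomputable def Amat (n : ℕ) (a : ℝ) : Matrix (ZMod n) (ZMod n) ℝ :=
  a • 1 + shiftMat n + (shiftMat n)ᵀ

noncomputable def uu (x : ℝ) (k : ℤ) : ℝ := (Polynomial.Chebyshev.U ℝ k).eval x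

lemma uu_def (x : ℝ) (k : ℤ) : (Polynomial.Chebyshev.U ℝ k).eval x = uu x k := rfl

lemma shift_mul_apply (n : ℕ) [NeZero n] (M : Matrix (ZMod n) (ZMod n) ℝ) (p q : ZMod n) :
    (shiftMat n * M) p q = M (p+1) q := by
  simp [Matrix.mul_apply, shiftMat, ite_mul]

lemma shiftT_mul_apply (n : ℕ) [NeZero n] (M : Matrix (ZMod n) (ZMod n) ℝ) (p q : ZMod n) :
    ((shiftMat n)ᵀ * M) p q = M (p-1) q := by
  rw [Matrix.mul_apply]
  rw [Finset.sum_eq_single (p-1)]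
  · simp [shiftMat]
  · intro k _ hk
    have : p ≠ k + 1 := by
      intro h; apply hk; rw [h]; ring
    simp [shiftMat, Matrix.transpose_apply, this]
  · simp

/-- The inverse of the Hessian `H = (-1/L) • A(a)` of the length functional
at the `r`-th iterate of a bouncing ball orbit has entries
`h^{pq} = (L / (2 (T_{2r}(−a/2) − 1))) (U_{2r−q+p−1}(−a/2) + U_{q−p−1}(−a/2))`. -/
theorem stmt2 (r : ℕ) (hr : 1 ≤ r) [NeZero (2 * r)] (L a : ℝ) (hL : 0 < L)
    (hT : (Polynomial.Chebyshev.T ℝ (2 * r)).eval (-a / 2) ≠ 1)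
    (H M : Matrix (ZMod (2 * r)) (ZMod (2 * r)) ℝ)
    (hH : H = (-1 / L) • Amat (2 * r) a)
    (hM : ∀ p q : ZMod (2 * r), M p q =
      L * ((Polynomial.Chebyshev.U ℝ (2 * r - ((q - p).val : ℤ) - 1)).eval (-a / 2) +
           (Polynomial.Chebyshev.U ℝ (((q - p).val : ℤ) - 1)).eval (-a / 2)) /
        (2 * ((Polynomial.Chebyshev.T ℝ (2 * r)).eval (-a / 2) - 1))) :
    H * M = 1 ∧ M * H = 1 := by
  have hn1 : 1 < 2 * r := by omega
  haveI : Fact (1 < 2 * r) := ⟨hn1⟩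
  set x : ℝ := -a / 2 with hx
  set Tv : ℝ := (T ℝ (2 * r)).eval x with hTv
  have hD0 : (2 * (Tv - 1)) ≠ 0 := by
    have : Tv - 1 ≠ 0 := sub_ne_zero.mpr hT
    positivity
  -- recurrence for uu
  have hurec : ∀ k : ℤ, uu x (k + 2) = 2 * x * uu x (k + 1) - uu x k := by
    intro k
    have h := congrArg (Polynomial.eval x) (U_add_two ℝ k)
    simp only [Polynomial.eval_sub, Polynomial.eval_mul, Polynomial.eval_X,
      Polynomial.eval_ofNat, uu_def] at h
    exact h
  -- main recurrence for the numerator g(d) = uu (2r-d-1) + uu (d-1)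
  have hrec : ∀ d : ℤ, a * (uu x (2*r - d - 1) + uu x (d - 1))
      + (uu x (2*r - d) + uu x (d - 2)) + (uu x (2*r - d - 2) + uu x d) = 0 := by
    intro d
    have h1 := hurec (2*r - d - 2)
    have h2 := hurec (d - 2)
    rw [show (2*(r:ℤ) - d - 2) + 2 = 2*r - d by ring,
        show (2*(r:ℤ) - d - 2) + 1 = 2*r - d - 1 by ring] at h1
    rw [show ((d:ℤ) - 2) + 2 = d by ring, show ((d:ℤ) - 2) + 1 = d - 1 by ring] at h2
    have ha : a = -(2*x) := by rw [hx]; ring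
    rw [ha]; linear_combination h1 + h2
  -- special values
  have hm1 : uu x (-1) = 0 := by simp [← uu_def, U_neg_one]
  have hm2 : uu x (-2) = -1 := by simp [← uu_def, U_neg_two]
  have h0 : uu x 0 = 1 := by simp [← uu_def, U_zero]
  have hUT : uu x (2*r) - uu x (2*r - 2) = 2 * Tv := by
    have h1 := congrArg (Polynomial.eval x) (T_eq_U_sub_X_mul_U ℝ (2*r))
    have h2 := congrArg (Polynomial.eval x) (U_sub_two ℝ (2*r))
    simp only [Polynomial.eval_sub, Polynomial.eval_mul, Polynomial.eval_X,
      Polynomial.eval_ofNat, uu_def, ← hTv] at h1 h2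
    linear_combination -2 * h1 - h2
  -- the value of (-1).val
  have hneg1 : (((-1 : ZMod (2*r)).val : ℤ)) = 2*r - 1 := by
    have e : (-1 : ZMod (2*r)) = ((2*r - 1 : ℕ) : ZMod (2*r)) := by
      have h2 : ((2*r : ℕ) : ZMod (2*r)) = 0 := ZMod.natCast_self _
      push_cast [Nat.cast_sub (by omega : 1 ≤ 2*r)] at h2 ⊢
      linear_combination -h2
    rw [e, ZMod.val_cast_of_lt (by omega)]
    push_cast [Nat.cast_sub (by omega : 1 ≤ 2*r)]
    ring
  -- entrywise formula for H * M
  have hHM : ∀ p q : ZMod (2*r), (H * M) p q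
      = (-1/L) * (a * M p q + M (p+1) q + M (p-1) q) := by
    intro p q
    rw [hH, Amat]
    rw [Matrix.smul_mul, Matrix.add_mul, Matrix.add_mul, Matrix.smul_mul]
    simp only [Matrix.smul_apply, Matrix.add_apply, smul_eq_mul,
      shift_mul_apply, shiftT_mul_apply, Matrix.one_mul]
    try ring
  have key : H * M = 1 := by
    ext p q
    rw [hHM p q, hM p q, hM (p+1) q, hM (p-1) q]
    simp only [uu_def]
    by_cases hpq : p = q
    · subst hpq
      have v0 : (((p - p).val : ℤ)) = 0 := by simp
      have v1 : (((p - (p+1)).val : ℤ)) = 2*r - 1 := by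
        have e : p - (p+1) = -1 := by ring
        rw [e, hneg1]
      have v2 : (((p - (p-1)).val : ℤ)) = 1 := by
        have e : p - (p-1) = 1 := by ring
        rw [e, ZMod.val_one]
        norm_num
      rw [v0, v1, v2, Matrix.one_apply_eq]
      rw [show (2*(r:ℤ) - 0 - 1) = 2*r - 1 by ring, show ((0:ℤ) - 1) = -1 by ring,
          show (2*(r:ℤ) - (2*r - 1) - 1) = 0 by ring,
          show ((2*(r:ℤ) - 1) - 1) = 2*r - 2 by ring,
          show ((1:ℤ) - 1) = 0 by ring]
      have hr0 := hrec 0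
      rw [show (2*(r:ℤ) - 0 - 1) = 2*r - 1 by ring, show (2*(r:ℤ) - 0 - 2) = 2*r - 2 by ring,
          show ((0:ℤ) - 1) = -1 by ring,
          show (2*(r:ℤ) - 0) = 2*r by ring, show ((0:ℤ) - 2) = -2 by ring] at hr0
      field_simp
      linear_combination -(hr0 - hUT - hm2 + h0)
    · -- off-diagonal
      rw [Matrix.one_apply_ne hpq]
      set v : ℕ := (q - p).val with hv
      have hvne : v ≠ 0 := by
        simp only [hv, ne_eq, ZMod.val_eq_zero]
        intro h
        exact hpq (sub_eq_zero.mp h).symm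
      have hvlt : v < 2*r := ZMod.val_lt _
      have hqp : (q - p) = (v : ZMod (2*r)) := by simp [hv, ZMod.natCast_val, ZMod.cast_id]
      have v1 : (((q - (p+1)).val : ℤ)) = (v : ℤ) - 1 := by
        have e : q - (p+1) = (q - p) - 1 := by ring
        have e2 : ((v : ZMod (2*r)) - 1) = ((v - 1 : ℕ) : ZMod (2*r)) := by
          push_cast [Nat.cast_sub (by omega : 1 ≤ v)]; ring
        rw [e, hqp, e2, ZMod.val_cast_of_lt (by omega)]
        push_cast [Nat.cast_sub (by omega : 1 ≤ v)]
        ring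
      by_cases hvtop : v = 2*r - 1
      · -- wrap-around case
        have v2 : (((q - (p-1)).val : ℤ)) = 0 := by
          have e : q - (p-1) = (q - p) + 1 := by ring
          have e2 : (((v : ℕ) : ZMod (2*r)) + 1) = ((v + 1 : ℕ) : ZMod (2*r)) := by
            push_cast; ring
          rw [e, hqp, e2, show v + 1 = 2*r by omega]
          simp
        rw [v1, v2]
        have hvz : ((v : ℤ)) = 2*r - 1 := by
          rw [hvtop]; push_cast [Nat.cast_sub (by omega : 1 ≤ 2*r)]; ring
        rw [hvz]
        rw [show (2*(r:ℤ) - ((2*r - 1) - 1) - 1) = 1 by ring,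
            show (((2*(r:ℤ) - 1) - 1) - 1) = 2*r - 3 by ring,
            show (2*(r:ℤ) - (2*r - 1) - 1) = 0 by ring,
            show ((2*(r:ℤ) - 1) - 1) = 2*r - 2 by ring,
            show (2*(r:ℤ) - 0 - 1) = 2*r - 1 by ring,
            show ((0:ℤ) - 1) = -1 by ring]
        have hr0 := hrec (2*r - 1)
        rw [show (2*(r:ℤ) - (2*r - 1) - 1) = 0 by ring,
            show (2*(r:ℤ) - (2*r - 1) - 2) = -1 by ring,
            show (2*(r:ℤ) - (2*r - 1)) = 1 by ring,
            show ((2*(r:ℤ) - 1) - 1) = 2*r - 2 by ring,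
            show ((2*(r:ℤ) - 1) - 2) = 2*r - 3 by ring] at hr0
        field_simp
        linear_combination -hr0
      · -- generic case
        have v2 : (((q - (p-1)).val : ℤ)) = (v : ℤ) + 1 := by
          have e : q - (p-1) = (q - p) + 1 := by ring
          have e2 : (((v : ℕ) : ZMod (2*r)) + 1) = ((v + 1 : ℕ) : ZMod (2*r)) := by
            push_cast; ring
          rw [e, hqp, e2, ZMod.val_cast_of_lt (by omega)]
          push_cast; ring
        rw [v1, v2]
        rw [show (2*(r:ℤ) - ((v:ℤ) - 1) - 1) = 2*r - v by ring,
            show (((v:ℤ) - 1) - 1) = (v:ℤ) - 2 by ring,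
            show (2*(r:ℤ) - ((v:ℤ) + 1) - 1) = 2*r - v - 2 by ring,
            show (((v:ℤ) + 1) - 1) = (v:ℤ) by ring]
        have hr0 := hrec v
        field_simp
        linear_combination -hr0
  exact ⟨key, mul_eq_one_comm.mp key⟩
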